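/- arXiv:1802.03344 — 2 statements merged into one kernel-verified Lean document; each statement's English description precedes it below -/
import Mathlib

section
/- Let n*, ℓ*, d ∈ ℕ, let ℓ ≥ 1, and let g : ℕ → ℕ → ℕ satisfy: (i) g(i, n) = 0 whenever i < n*, or n < i, or n > i + d; (ii) g(i + ℓ, n + ℓ) = g(i, n) for all i ≥ n* + ℓ* and all n. Define F(n) = Σ_{i=n*}^{n} g(i, n). Then F(n + ℓ) = F(n) for every n ≥ n* + ℓ* + d. -/
/-- Periodicity of tree layer cardinalities: if the branch layer counts `g`
vanish outside the window and are periodic with period `ℓ` from the periodic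
root on, then the tree layer cardinality `F n = Σ_{i=n*}^{n} g i n` satisfies
`F (n + ℓ) = F n` for all `n ≥ n* + ℓ* + d`. -/
theorem stmt3 (nstar lstar d ℓ : ℕ) (hℓ : 1 ≤ ℓ) (g : ℕ → ℕ → ℕ)
    (h0 : ∀ i n : ℕ, (i < nstar ∨ n < i ∨ i + d < n) → g i n = 0)
    (hper : ∀ i n : ℕ, nstar + lstar ≤ i → g (i + ℓ) (n + ℓ) = g i n)
    (F : ℕ → ℕ) (hF : ∀ n : ℕ, F n = ∑ i ∈ Finset.Icc nstar n, g i n) :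
    ∀ n : ℕ, nstar + lstar + d ≤ n → F (n + ℓ) = F n := by
  intro n hn
  rw [hF, hF]
  have h1 : ∑ i ∈ Finset.Icc nstar (n + ℓ), g i (n + ℓ)
      = ∑ i ∈ Finset.Icc (nstar + ℓ) (n + ℓ), g i (n + ℓ) := by
    refine (Finset.sum_subset ?_ ?_).symm
    · intro x hx
      simp only [Finset.mem_Icc] at hx ⊢
      omega
    · intro x hx hx2
      simp only [Finset.mem_Icc] at hx hx2
      exact h0 x (n + ℓ) (by omega)
  rw [h1]
  have h2 : Finset.Icc (nstar + ℓ) (n + ℓ)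
      = (Finset.Icc nstar n).map (addRightEmbedding ℓ) := by
    ext x
    simp [Finset.mem_map, addRightEmbedding]
    constructor
    · intro hx; exact ⟨x - ℓ, by omega, by omega⟩
    · rintro ⟨a, ha, rfl⟩; omega
  rw [h2, Finset.sum_map]
  refine Finset.sum_congr rfl ?_
  intro i hi
  simp only [Finset.mem_Icc] at hi
  simp only [addRightEmbedding_apply]
  by_cases h : nstar + lstar ≤ i
  · exact hper i n h
  · rw [h0 (i + ℓ) (n + ℓ) (by omega), h0 i n (by omega)]
end

section
/- Let n*, ℓ*, d ∈ ℕ, let ℓ ≥ 1, and let g : ℕ → ℕ → ℕ satisfy: (i) g(i, n) = 0 whenever i < n*, or n < i, or n > i + d; (ii) g(i + ℓ, n + ℓ) = g(i, n) for all i ≥ n* + ℓ* and all n. Define F(n) = Σ_{i=n*}^{n} g(i, n). Then the width sup_{n ≥ n*} F(n) is attained and equals max { F(n) : n* ≤ n ≤ n* + ℓ* + ℓ + d − 1 }. -/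
/-- The width `sup_{n ≥ n*} F n` of a tree with periodic branch layer counts is
attained and equals the maximum of `F` over the finite window
`n* ≤ n ≤ n* + ℓ* + ℓ + d − 1`. -/
theorem stmt4 (nstar lstar d ℓ : ℕ) (hℓ : 1 ≤ ℓ) (g : ℕ → ℕ → ℕ)
    (h0 : ∀ i n : ℕ, (i < nstar ∨ n < i ∨ i + d < n) → g i n = 0)
    (hper : ∀ i n : ℕ, nstar + lstar ≤ i → g (i + ℓ) (n + ℓ) = g i n)
    (F : ℕ → ℕ) (hF : ∀ n : ℕ, F n = ∑ i ∈ Finset.Icc nstar n, g i n) :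
    (∃ n0 : ℕ, nstar ≤ n0 ∧ n0 ≤ nstar + lstar + ℓ + d - 1 ∧
        ∀ n : ℕ, nstar ≤ n → F n ≤ F n0) ∧
    sSup {x : ℕ | ∃ n : ℕ, nstar ≤ n ∧ F n = x}
      = (Finset.Icc nstar (nstar + lstar + ℓ + d - 1)).sup F := by
  set W := nstar + lstar + ℓ + d - 1 with hW
  have hWge : nstar ≤ W := by omega
  -- periodicity of F for large n
  have key : ∀ n : ℕ, nstar + lstar + ℓ + d ≤ n → F n = F (n - ℓ) := by
    intro n hn
    set m := n - ℓ with hm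
    have hmn : m + ℓ = n := by omega
    rw [hF n, hF m]
    -- restrict both sums
    have hL : ∑ i ∈ Finset.Icc nstar n, g i n
        = ∑ i ∈ Finset.Icc (nstar + lstar + ℓ) n, g i n := by
      refine (Finset.sum_subset ?_ ?_).symm
      · exact Finset.Icc_subset_Icc_left (by omega)
      · intro x hx hnx
        simp only [Finset.mem_Icc] at hx hnx
        exact h0 x n (by omega)
    have hR : ∑ i ∈ Finset.Icc nstar m, g i m
        = ∑ i ∈ Finset.Icc (nstar + lstar) m, g i m := by
      refine (Finset.sum_subset ?_ ?_).symm
      · exact Finset.Icc_subset_Icc_left (by omega)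
      · intro x hx hnx
        simp only [Finset.mem_Icc] at hx hnx
        exact h0 x m (by omega)
    rw [hL, hR]
    have hmap : Finset.Icc (nstar + lstar + ℓ) n
        = Finset.map (addRightEmbedding ℓ) (Finset.Icc (nstar + lstar) m) := by
      rw [Finset.map_add_right_Icc]
      congr 1
      omega
    rw [hmap, Finset.sum_map]
    refine Finset.sum_congr rfl ?_
    intro i hi
    simp only [Finset.mem_Icc] at hi
    simp only [addRightEmbedding_apply]
    rw [← hmn]
    exact hper i m hi.1
  -- every F n (n ≥ nstar) equals F m for some m in the window
  have red : ∀ n : ℕ, nstar ≤ n → ∃ m : ℕ, nstar ≤ m ∧ m ≤ W ∧ F n = F m := by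
    intro n
    induction n using Nat.strong_induction_on with
    | _ n ih =>
      intro hn
      by_cases h : n ≤ W
      · exact ⟨n, hn, h, rfl⟩
      · have hbig : nstar + lstar + ℓ + d ≤ n := by omega
        obtain ⟨m, hm1, hm2, hm3⟩ := ih (n - ℓ) (by omega) (by omega)
        exact ⟨m, hm1, hm2, (key n hbig).trans hm3⟩
  -- max over the window
  obtain ⟨n0, hn0mem, hn0max⟩ :=
    Finset.exists_max_image (Finset.Icc nstar W) F ⟨nstar, by simp [hWge]⟩
  simp only [Finset.mem_Icc] at hn0mem
  have hmax : ∀ n : ℕ, nstar ≤ n → F n ≤ F n0 := by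
    intro n hn
    obtain ⟨m, hm1, hm2, hm3⟩ := red n hn
    rw [hm3]
    exact hn0max m (Finset.mem_Icc.mpr ⟨hm1, hm2⟩)
  refine ⟨⟨n0, hn0mem.1, hn0mem.2, hmax⟩, ?_⟩
  have hsupmem : (Finset.Icc nstar W).sup F = F n0 := by
    apply le_antisymm
    · exact Finset.sup_le fun b hb => hn0max b hb
    · exact Finset.le_sup (Finset.mem_Icc.mpr hn0mem)
  rw [hsupmem]
  apply le_antisymm
  · refine csSup_le ?_ ?_
    · exact ⟨F n0, ⟨n0, hn0mem.1, rfl⟩⟩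
    · rintro x ⟨n, hn, rfl⟩
      exact hmax n hn
  · apply le_csSup
    · exact ⟨F n0, by rintro x ⟨n, hn, rfl⟩; exact hmax n hn⟩
    · exact ⟨n0, hn0mem.1, rfl⟩
end
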